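/- arXiv:2401.03857 — 3 statements merged into one kernel-verified Lean document; each statement's English description precedes it below -/
import Mathlib

section
/- Let M be a finite MDP\R with policy π_E. A reward r ∈ ℝ^{S×A} makes π_E optimal for M ∪ r (i.e., the advantage A^{π_E}_{M∪r}(s,a) ≤ 0 for all (s,a), with equality whenever π_E(a|s) > 0) if and only if there exist ζ ∈ ℝ^{S×A} with ζ ≥ 0 and V ∈ ℝ^S such that r = −B̄^{π_E} ζ + (E − γP)V, where (B̄^{π_E}ζ)(s,a) = 1{π_E(a|s)=0} ζ(s,a). -/
lemma wavg_abs_le {ι : Type} [Fintype ι] (w x : ι → ℝ)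
    (hw : ∀ i, 0 ≤ w i) (hw1 : ∑ i, w i = 1) (M : ℝ)
    (hx : ∀ i, |x i| ≤ M) : |∑ i, w i * x i| ≤ M := by
  calc |∑ i, w i * x i| ≤ ∑ i, |w i * x i| := Finset.abs_sum_le_sum_abs _ _
    _ = ∑ i, w i * |x i| := by
        refine Finset.sum_congr rfl fun i _ => ?_
        rw [abs_mul, abs_of_nonneg (hw i)]
    _ ≤ ∑ i, w i * M :=
        Finset.sum_le_sum fun i _ => mul_le_mul_of_nonneg_left (hx i) (hw i)
    _ = M := by rw [← Finset.sum_mul, hw1, one_mul]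

/-- A reward `r` makes `π_E` optimal for `M ∪ r` iff there exist
`ζ ≥ 0` and `V` with `r = −B̄^{π_E} ζ + (E − γP)V`. -/
theorem stmt_3 {S A : Type} [Fintype S] [Fintype A]
    (p : S → A → S → ℝ) (hp0 : ∀ s a s', 0 ≤ p s a s')
    (hp1 : ∀ s a, ∑ s', p s a s' = 1)
    (πE : S → A → ℝ) (hπ0 : ∀ s a, 0 ≤ πE s a) (hπ1 : ∀ s, ∑ a, πE s a = 1)
    (γ : ℝ) (hγ0 : 0 ≤ γ) (hγ1 : γ < 1)
    (r : S → A → ℝ) (Q : S → A → ℝ)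
    (hQ : ∀ s a, Q s a = r s a + γ * ∑ s', p s a s' * ∑ a', πE s' a' * Q s' a') :
    ((∀ s a, 0 < πE s a → Q s a = ∑ a', πE s a' * Q s a') ∧
       (∀ s a, Q s a ≤ ∑ a', πE s a' * Q s a')) ↔
    ∃ (ζ : S → A → ℝ) (V : S → ℝ), (∀ s a, 0 ≤ ζ s a) ∧
      ∀ s a, r s a =
        -(if πE s a = 0 then ζ s a else 0) + (V s - γ * ∑ s', p s a s' * V s') := by
  constructor
  · rintro ⟨h1, h2⟩
    refine ⟨fun s a => (∑ a', πE s a' * Q s a') - Q s a,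
      fun s => ∑ a', πE s a' * Q s a', fun s a => sub_nonneg.2 (h2 s a), fun s a => ?_⟩
    have hr : r s a = Q s a - γ * ∑ s', p s a s' * ∑ a', πE s' a' * Q s' a' := by
      rw [hQ s a]; ring
    rw [hr]
    by_cases hπ : πE s a = 0
    · rw [if_pos hπ]; ring
    · rw [if_neg hπ, h1 s a (lt_of_le_of_ne (hπ0 s a) (Ne.symm hπ))]; ring
  · rintro ⟨ζ, V, hζ, hr⟩
    set d : S → ℝ := fun s => (∑ a, πE s a * Q s a) - V s with hd
    have hQeq : ∀ s a, Q s a = -(if πE s a = 0 then ζ s a else 0) + V s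
        + γ * ∑ s', p s a s' * d s' := by
      intro s a
      have hsplit : ∑ s', p s a s' * d s'
          = (∑ s', p s a s' * ∑ a', πE s' a' * Q s' a') - ∑ s', p s a s' * V s' := by
        rw [← Finset.sum_sub_distrib]
        exact Finset.sum_congr rfl fun s' _ => by simp [hd, mul_sub]
      rw [hQ s a, hr s a, hsplit]; ring
    have hdrec : ∀ s, d s = γ * ∑ a, πE s a * ∑ s', p s a s' * d s' := by
      intro s
      have h1 : ∑ a, πE s a * Q s a
          = ∑ a, (πE s a * V s + πE s a * (γ * ∑ s', p s a s' * d s')) := by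
        refine Finset.sum_congr rfl fun a _ => ?_
        by_cases hπ : πE s a = 0
        · simp [hπ]
        · rw [hQeq s a, if_neg hπ]; ring
      have h2 : ∑ a, (πE s a * V s + πE s a * (γ * ∑ s', p s a s' * d s'))
          = V s + γ * ∑ a, πE s a * ∑ s', p s a s' * d s' := by
        rw [Finset.sum_add_distrib, ← Finset.sum_mul, hπ1 s, one_mul, Finset.mul_sum]
        congr 1
        exact Finset.sum_congr rfl fun a _ => by ring
      show (∑ a, πE s a * Q s a) - V s = _
      rw [h1, h2]; ring
    have hd0 : ∀ s, d s = 0 := by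
      intro s
      obtain ⟨s0, _, hmax⟩ := Finset.exists_max_image Finset.univ (fun s => |d s|)
        ⟨s, Finset.mem_univ s⟩
      have hinner : ∀ a, |∑ s', p s0 a s' * d s'| ≤ |d s0| := fun a =>
        wavg_abs_le _ _ (hp0 s0 a) (hp1 s0 a) _ (fun s' => hmax s' (Finset.mem_univ s'))
      have houter : |∑ a, πE s0 a * ∑ s', p s0 a s' * d s'| ≤ |d s0| :=
        wavg_abs_le _ _ (hπ0 s0) (hπ1 s0) _ hinner
      have key : |d s0| ≤ γ * |d s0| := by
        calc |d s0| = |γ| * |∑ a, πE s0 a * ∑ s', p s0 a s' * d s'| := by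
              rw [← abs_mul, ← hdrec s0]
          _ ≤ γ * |d s0| := by
              rw [abs_of_nonneg hγ0]
              exact mul_le_mul_of_nonneg_left houter hγ0
      have h0 : |d s0| = 0 := le_antisymm (by nlinarith [abs_nonneg (d s0)]) (abs_nonneg _)
      have := hmax s (Finset.mem_univ s)
      rw [h0] at this
      exact abs_eq_zero.1 (le_antisymm this (abs_nonneg _))
    have hQ' : ∀ s a, Q s a = -(if πE s a = 0 then ζ s a else 0) + V s := by
      intro s a
      rw [hQeq s a]
      simp [hd0]
    have hVQ : ∀ s, ∑ a, πE s a * Q s a = V s := fun s => by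
      have := hd0 s; simp only [hd] at this; linarith
    constructor
    · intro s a hπ
      rw [hQ' s a, if_neg (ne_of_gt hπ), hVQ s]; ring
    · intro s a
      rw [hQ' s a, hVQ s]
      have : 0 ≤ (if πE s a = 0 then ζ s a else 0) := by
        split <;> [exact hζ s a; exact le_refl 0]
      linarith
end

section
/- Let M be a finite MDP\R with optimal expert policy π_{E_1} and sub-optimal expert policy π_{E_i} with sub-optimality bound ξ_i > 0. Suppose r = −B̄^{π_{E_1}} ζ + (E − γP)V with ζ ≥ 0. Then V^{π_{E_1}}_{M∪r}(s) − V^{π_{E_i}}_{M∪r}(s) ≤ ξ_i holds for all s ∈ S if and only if (I_S − γ π_{E_i} P)^{-1} π_{E_i} B̄^{π_{E_1}} ζ ≤ ξ_i · 1_S componentwise. -/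
open Matrix

lemma aux_isUnit {S : Type} [Fintype S] [DecidableEq S] (M : Matrix S S ℝ)
    (hM0 : ∀ s s', 0 ≤ M s s') (hM1 : ∀ s, ∑ s', M s s' = 1)
    (γ : ℝ) (hγ0 : 0 ≤ γ) (hγ1 : γ < 1) : IsUnit (1 - γ • M) := by
  rw [← Matrix.mulVec_injective_iff_isUnit]
  intro v w hvw
  by_cases hS : Nonempty S
  · funext s
    set u : S → ℝ := fun s => v s - w s with hu
    have h0 : (1 - γ • M) *ᵥ u = 0 := by
      rw [show u = v - w from rfl, Matrix.mulVec_sub, hvw, sub_self]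
    have hMu : ∀ s, u s = γ * ∑ s', M s s' * u s' := by
      intro s
      have h := congrFun h0 s
      simp only [Matrix.mulVec, dotProduct, Matrix.sub_apply, Matrix.one_apply,
        Matrix.smul_apply, smul_eq_mul, sub_mul, ite_mul, one_mul, zero_mul,
        Finset.sum_sub_distrib, Finset.sum_ite_eq, Finset.mem_univ, if_true,
        Pi.zero_apply, Finset.mul_sum] at h
      rw [Finset.mul_sum]
      have he : ∑ s', γ * (M s s' * u s') = ∑ x, γ * M s x * u x :=
        Finset.sum_congr rfl fun i _ => by ring
      linarith [h, he]
    -- pick max of |u|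
    obtain ⟨s0, _, hs0⟩ := Finset.exists_max_image Finset.univ (fun s => |u s|)
      ⟨Classical.arbitrary S, Finset.mem_univ _⟩
    have key : |u s0| ≤ γ * |u s0| := by
      calc |u s0| = γ * |∑ s', M s0 s' * u s'| := by
            rw [hMu s0, abs_mul, abs_of_nonneg hγ0]
        _ ≤ γ * ∑ s', M s0 s' * |u s'| := by
            apply mul_le_mul_of_nonneg_left _ hγ0
            refine (Finset.abs_sum_le_sum_abs _ _).trans ?_
            apply Finset.sum_le_sum
            intro i _
            rw [abs_mul, abs_of_nonneg (hM0 s0 i)]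
        _ ≤ γ * ∑ s', M s0 s' * |u s0| := by
            apply mul_le_mul_of_nonneg_left _ hγ0
            apply Finset.sum_le_sum
            intro i _
            exact mul_le_mul_of_nonneg_left (hs0 i (Finset.mem_univ i)) (hM0 s0 i)
        _ = γ * |u s0| := by rw [← Finset.sum_mul, hM1 s0, one_mul]
    have h0 : |u s0| = 0 := by nlinarith [abs_nonneg (u s0)]
    have := abs_nonneg (u s)
    have hle := hs0 s (Finset.mem_univ s)
    have : |u s| = 0 := le_antisymm (by linarith) (abs_nonneg _)
    have := abs_eq_zero.mp this
    simpa [hu, sub_eq_zero] using this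
  · funext s; exact absurd ⟨s⟩ hS

lemma aux_cancel {S : Type} [Fintype S] [DecidableEq S] {M : Matrix S S ℝ}
    (h : IsUnit M) (w : S → ℝ) : M⁻¹ *ᵥ (M *ᵥ w) = w := by
  rw [Matrix.mulVec_mulVec, Matrix.nonsing_inv_mul _ ((Matrix.isUnit_iff_isUnit_det _).mp h),
    Matrix.one_mulVec]

lemma aux_mulVec_oneSub {S : Type} [Fintype S] [DecidableEq S] (M : Matrix S S ℝ)
    (γ : ℝ) (V : S → ℝ) (s : S) :
    ((1 - γ • M) *ᵥ V) s = V s - γ * ∑ x, M s x * V x := by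
  simp [Matrix.mulVec, dotProduct, Matrix.sub_apply, Matrix.one_apply,
    Matrix.smul_apply, sub_mul, ite_mul, Finset.sum_sub_distrib, Finset.mul_sum, mul_assoc]

lemma aux_swap {S A : Type} [Fintype S] [Fintype A] (π : S → A → ℝ) (p : S → A → S → ℝ)
    (V : S → ℝ) (s : S) :
    ∑ a, π s a * ∑ s', p s a s' * V s' = ∑ s', (∑ a, π s a * p s a s') * V s' := by
  simp_rw [Finset.mul_sum, Finset.sum_mul, ← mul_assoc]
  exact Finset.sum_comm

/-- For `r = −B̄^{π_{E_1}}ζ + (E−γP)V` with `ζ ≥ 0`, the condition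
`V^{π_{E_1}}(s) − V^{π_{E_i}}(s) ≤ ξ_i` for all `s` holds iff
`(I_S − γπ_{E_i}P)⁻¹ π_{E_i} B̄^{π_{E_1}} ζ ≤ ξ_i · 1_S` componentwise. -/
theorem stmt_5 {S A : Type} [Fintype S] [DecidableEq S] [Fintype A]
    (p : S → A → S → ℝ) (hp0 : ∀ s a s', 0 ≤ p s a s')
    (hp1 : ∀ s a, ∑ s', p s a s' = 1)
    (π1 πi : S → A → ℝ)
    (hπ10 : ∀ s a, 0 ≤ π1 s a) (hπ11 : ∀ s, ∑ a, π1 s a = 1)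
    (hπi0 : ∀ s a, 0 ≤ πi s a) (hπi1 : ∀ s, ∑ a, πi s a = 1)
    (γ : ℝ) (hγ0 : 0 ≤ γ) (hγ1 : γ < 1)
    (ξ : ℝ) (hξ : 0 < ξ)
    (ζ : S → A → ℝ) (hζ : ∀ s a, 0 ≤ ζ s a) (V : S → ℝ)
    (r : S → A → ℝ)
    (hr : ∀ s a, r s a =
      -(if π1 s a = 0 then ζ s a else 0) + (V s - γ * ∑ s', p s a s' * V s'))
    (M1 Mi : Matrix S S ℝ)
    (hM1 : ∀ s s', M1 s s' = ∑ a, π1 s a * p s a s')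
    (hMi : ∀ s s', Mi s s' = ∑ a, πi s a * p s a s') :
    (∀ s, ((1 - γ • M1)⁻¹ *ᵥ (fun s => ∑ a, π1 s a * r s a)) s
            - ((1 - γ • Mi)⁻¹ *ᵥ (fun s => ∑ a, πi s a * r s a)) s ≤ ξ) ↔
    (∀ s, ((1 - γ • Mi)⁻¹ *ᵥ
        (fun s => ∑ a, πi s a * (if π1 s a = 0 then ζ s a else 0))) s ≤ ξ) := by
  set g : S → ℝ := fun s => ∑ a, πi s a * (if π1 s a = 0 then ζ s a else 0) with hg
  -- stochasticity of M1, Mi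
  have hM10 : ∀ s s', 0 ≤ M1 s s' := fun s s' => by
    rw [hM1]; exact Finset.sum_nonneg fun a _ => mul_nonneg (hπ10 s a) (hp0 s a s')
  have hMi0 : ∀ s s', 0 ≤ Mi s s' := fun s s' => by
    rw [hMi]; exact Finset.sum_nonneg fun a _ => mul_nonneg (hπi0 s a) (hp0 s a s')
  have hM1r : ∀ s, ∑ s', M1 s s' = 1 := fun s => by
    simp_rw [hM1]; rw [Finset.sum_comm]
    simp_rw [← Finset.mul_sum, hp1, mul_one]; exact hπ11 s
  have hMir : ∀ s, ∑ s', Mi s s' = 1 := fun s => by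
    simp_rw [hMi]; rw [Finset.sum_comm]
    simp_rw [← Finset.mul_sum, hp1, mul_one]; exact hπi1 s
  have hU1 : IsUnit (1 - γ • M1) := aux_isUnit M1 hM10 hM1r γ hγ0 hγ1
  have hUi : IsUnit (1 - γ • Mi) := aux_isUnit Mi hMi0 hMir γ hγ0 hγ1
  -- π1 r = (1 - γM1) V
  have key1 : (fun s => ∑ a, π1 s a * r s a) = (1 - γ • M1) *ᵥ V := by
    funext s
    have hz : ∀ a, π1 s a * (if π1 s a = 0 then ζ s a else 0) = 0 := fun a => by
      by_cases h : π1 s a = 0 <;> simp [h]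
    rw [aux_mulVec_oneSub]
    calc ∑ a, π1 s a * r s a
        = ∑ a, (π1 s a * V s - γ * (π1 s a * ∑ s', p s a s' * V s')) := by
          refine Finset.sum_congr rfl fun a _ => ?_
          rw [hr, mul_add, mul_neg, hz a, neg_zero, zero_add]; ring
      _ = (∑ a, π1 s a) * V s - γ * ∑ a, π1 s a * ∑ s', p s a s' * V s' := by
          rw [Finset.sum_sub_distrib, Finset.sum_mul, Finset.mul_sum]
      _ = V s - γ * ∑ x, M1 s x * V x := by
          rw [hπ11 s, one_mul, aux_swap]
          simp_rw [← hM1]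
  -- πi r = (1 - γMi) V - g
  have keyi : (fun s => ∑ a, πi s a * r s a) = (1 - γ • Mi) *ᵥ V - g := by
    funext s
    rw [Pi.sub_apply, aux_mulVec_oneSub]
    calc ∑ a, πi s a * r s a
        = ∑ a, ((πi s a * V s - γ * (πi s a * ∑ s', p s a s' * V s'))
            - πi s a * (if π1 s a = 0 then ζ s a else 0)) := by
          refine Finset.sum_congr rfl fun a _ => ?_
          rw [hr]; ring
      _ = ((∑ a, πi s a) * V s - γ * ∑ a, πi s a * ∑ s', p s a s' * V s') - g s := by
          rw [Finset.sum_sub_distrib, Finset.sum_sub_distrib, Finset.sum_mul, Finset.mul_sum]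
      _ = V s - γ * ∑ x, Mi s x * V x - g s := by
          rw [hπi1 s, one_mul, aux_swap]
          simp_rw [← hMi]
  have e1 : (1 - γ • M1)⁻¹ *ᵥ (fun s => ∑ a, π1 s a * r s a) = V := by
    rw [key1, aux_cancel hU1]
  have e2 : (1 - γ • Mi)⁻¹ *ᵥ (fun s => ∑ a, πi s a * r s a)
      = V - (1 - γ • Mi)⁻¹ *ᵥ g := by
    rw [keyi, Matrix.mulVec_sub, aux_cancel hUi]
  constructor
  · intro h s
    have := h s
    rw [e1, e2] at this
    simpa using this
  · intro h s
    have := h s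
    rw [e1, e2]
    simpa using this
end

section
/- Let π_{E_1} and π_{E_i} be deterministic policies on a finite MDP\R and ξ_i > 0. If for every state s the expert-performance-gap constraint holds with equality, V^{π_{E_1}}_{M∪r}(s) − V^{π_{E_i}}_{M∪r}(s) = ξ_i, for a reward of the form r = −B̄^{π_{E_1}}ζ + (E−γP)V with ζ ≥ 0, then for every state-action pair (s,a) with π_{E_1}(a|s) = 0 and π_{E_i}(a|s) = 1, it must hold that ζ(s,a) = ξ_i(1−γ). -/
open Matrix

lemma stmt7_entry {S : Type} [Fintype S] [DecidableEq S] (M : Matrix S S ℝ)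
    (γ : ℝ) (v : S → ℝ) (s : S) :
    ((1 - γ • M) *ᵥ v) s = v s - γ * ∑ s', M s s' * v s' := by
  rw [sub_mulVec, Pi.sub_apply, one_mulVec, smul_mulVec, Pi.smul_apply,
    smul_eq_mul, mulVec, dotProduct]

lemma stmt7_isUnit {S : Type} [Fintype S] [DecidableEq S] (M : Matrix S S ℝ)
    (h0 : ∀ s s', 0 ≤ M s s') (h1 : ∀ s, ∑ s', M s s' = 1)
    {γ : ℝ} (hγ0 : 0 ≤ γ) (hγ1 : γ < 1) : IsUnit (1 - γ • M) := by
  rw [← Matrix.mulVec_injective_iff_isUnit]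
  intro v w h
  have hu : (1 - γ • M) *ᵥ (v - w) = 0 := by rw [mulVec_sub, h, sub_self]
  set u := v - w with hudef
  have key : ∀ s, u s = γ * ∑ s', M s s' * u s' := by
    intro s
    have := congrFun hu s
    rw [stmt7_entry] at this
    simp only [Pi.zero_apply] at this
    linarith
  have huz : u = 0 := by
    funext s
    have hne : (Finset.univ : Finset S).Nonempty := ⟨s, Finset.mem_univ s⟩
    obtain ⟨s0, -, hs0⟩ := Finset.exists_max_image Finset.univ (fun t => |u t|) hne
    have hb : |u s0| ≤ γ * |u s0| := by
      calc |u s0| = γ * |∑ s', M s0 s' * u s'| := by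
            rw [key s0, abs_mul, abs_of_nonneg hγ0]
        _ ≤ γ * ∑ s', M s0 s' * |u s'| := by
            apply mul_le_mul_of_nonneg_left _ hγ0
            refine (Finset.abs_sum_le_sum_abs _ _).trans ?_
            apply Finset.sum_le_sum
            intro i _
            rw [abs_mul, abs_of_nonneg (h0 s0 i)]
        _ ≤ γ * ∑ s', M s0 s' * |u s0| := by
            apply mul_le_mul_of_nonneg_left _ hγ0
            apply Finset.sum_le_sum
            intro i _
            exact mul_le_mul_of_nonneg_left (hs0 i (Finset.mem_univ i)) (h0 s0 i)
        _ = γ * |u s0| := by rw [← Finset.sum_mul, h1 s0, one_mul]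
    have h0' : |u s0| = 0 := by nlinarith [abs_nonneg (u s0)]
    have := hs0 s (Finset.mem_univ s)
    have : |u s| ≤ 0 := h0' ▸ this
    simpa using le_antisymm this (abs_nonneg _)
  have := sub_eq_zero.mp huz
  exact this

/-- For deterministic policies `π_{E_1}` (given by `f1`) and
`π_{E_i}` (given by `fi`), if the performance-gap constraint holds with
equality at every state for a reward `r = −B̄^{π_{E_1}}ζ + (E−γP)V` with
`ζ ≥ 0`, then `ζ(s, fi s) = ξ_i(1−γ)` at every state where the two policies
differ (i.e. where `π_{E_1}(a|s)=0` and `π_{E_i}(a|s)=1`). -/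
theorem stmt_7 {S A : Type} [Fintype S] [DecidableEq S] [Fintype A] [DecidableEq A]
    (p : S → A → S → ℝ) (hp0 : ∀ s a s', 0 ≤ p s a s')
    (hp1 : ∀ s a, ∑ s', p s a s' = 1)
    (f1 fi : S → A)
    (γ : ℝ) (hγ0 : 0 ≤ γ) (hγ1 : γ < 1)
    (ξ : ℝ) (hξ : 0 < ξ)
    (ζ : S → A → ℝ) (hζ : ∀ s a, 0 ≤ ζ s a) (V : S → ℝ)
    (r : S → A → ℝ)
    (hr : ∀ s a, r s a =
      -(if a = f1 s then 0 else ζ s a) + (V s - γ * ∑ s', p s a s' * V s'))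
    (M1 Mi : Matrix S S ℝ)
    (hM1 : ∀ s s', M1 s s' = p s (f1 s) s')
    (hMi : ∀ s s', Mi s s' = p s (fi s) s')
    (hgap : ∀ s, ((1 - γ • M1)⁻¹ *ᵥ (fun s => r s (f1 s))) s
              - ((1 - γ • Mi)⁻¹ *ᵥ (fun s => r s (fi s))) s = ξ) :
    ∀ s, fi s ≠ f1 s → ζ s (fi s) = ξ * (1 - γ) := by
  have hU1 : IsUnit (1 - γ • M1) :=
    stmt7_isUnit M1 (fun s s' => hM1 s s' ▸ hp0 s (f1 s) s')
      (fun s => by simp only [hM1]; exact hp1 s (f1 s)) hγ0 hγ1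
  have hUi : IsUnit (1 - γ • Mi) :=
    stmt7_isUnit Mi (fun s s' => hMi s s' ▸ hp0 s (fi s) s')
      (fun s => by simp only [hMi]; exact hp1 s (fi s)) hγ0 hγ1
  set z : S → ℝ := fun s => if fi s = f1 s then 0 else ζ s (fi s) with hz
  -- r1 = A1 *ᵥ V
  have h1 : (1 - γ • M1) *ᵥ V = (fun s => r s (f1 s)) := by
    funext s
    rw [stmt7_entry, hr]
    simp [hM1]
  -- ri = Ai *ᵥ V - z
  have hi : (fun s => r s (fi s)) = (1 - γ • Mi) *ᵥ V - z := by
    funext s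
    rw [Pi.sub_apply, stmt7_entry, hr]
    simp only [hMi, hz]
    ring
  have hinv1 : (1 - γ • M1)⁻¹ *ᵥ (fun s => r s (f1 s)) = V := by
    rw [← h1, mulVec_mulVec, nonsing_inv_mul _ ((isUnit_iff_isUnit_det _).mp hU1),
      one_mulVec]
  have hinvi : (1 - γ • Mi)⁻¹ *ᵥ (fun s => r s (fi s))
      = V - (1 - γ • Mi)⁻¹ *ᵥ z := by
    rw [hi, mulVec_sub, mulVec_mulVec, nonsing_inv_mul _ ((isUnit_iff_isUnit_det _).mp hUi),
      one_mulVec]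
  have hzeq : (1 - γ • Mi)⁻¹ *ᵥ z = fun _ => ξ := by
    funext s
    have := hgap s
    rw [hinv1, hinvi] at this
    simpa using this
  have hzfin : z = (1 - γ • Mi) *ᵥ (fun _ => ξ) := by
    have : (1 - γ • Mi) *ᵥ ((1 - γ • Mi)⁻¹ *ᵥ z) = z := by
      rw [mulVec_mulVec, mul_nonsing_inv _ ((isUnit_iff_isUnit_det _).mp hUi), one_mulVec]
    rw [← this, hzeq]
  intro s hs
  have hzs := congrFun hzfin s
  have hsum : ∑ s', Mi s s' = 1 := by simp only [hMi]; exact hp1 s (fi s)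
  have hrhs : ((1 - γ • Mi) *ᵥ (fun _ => ξ)) s = ξ * (1 - γ) := by
    rw [stmt7_entry, ← Finset.sum_mul, hsum]
    ring
  rw [hz] at hzs
  simp only [if_neg hs] at hzs
  rw [hzs, hrhs]
end
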